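/- In the setting of maximal ε-groups ending at a common time (groups of the form Grp(a, s, z)), the nonempty groups among any finite collection G₁, …, G_m all ending at time z form a laminar family: for any two of them, either they are disjoint or one is contained in the other. -/

import Mathlib

def EpsConnected {X : Type*} (d : ℝ → X → X → ℝ) (ε t : ℝ) (a b : X) : Prop :=
  Relation.ReflTransGen (fun x y => d t x y ≤ ε) a b

def EpsGrp {X : Type*} (d : ℝ → X → X → ℝ) (ε : ℝ) (a : X) (s z : ℝ) : Set X :=
  {x | ∀ t ∈ Set.Icc s z, EpsConnected d ε t x a}

lemma EpsConnected.symm' {X : Type*} {d : ℝ → X → X → ℝ}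
    (hsymm : ∀ t a b, d t a b = d t b a) {ε t : ℝ} {a b : X}
    (h : EpsConnected d ε t a b) : EpsConnected d ε t b a :=
  (@Relation.ReflTransGen.symmetric _ _ ⟨fun x y hxy => by
    simpa [hsymm t x y] using hxy⟩).symm _ _ h

theorem groups_laminar {X : Type*} [Fintype X] (d : ℝ → X → X → ℝ)
    (hsymm : ∀ t a b, d t a b = d t b a) (hrefl : ∀ t a, d t a a = 0)
    (ε : ℝ) (hε : 0 ≤ ε) (m : ℕ) (G : Fin m → Set X) (a : Fin m → X)
    (s : Fin m → ℝ) (z : ℝ) (hsz : ∀ i, s i ≤ z)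
    (hGrp : ∀ i, G i = EpsGrp d ε (a i) (s i) z) (hne : ∀ i, (G i).Nonempty) :
    ∀ i j : Fin m, Disjoint (G i) (G j) ∨ G i ⊆ G j ∨ G j ⊆ G i := by
  have key : ∀ i j : Fin m, s i ≤ s j → ∀ x, x ∈ G i → x ∈ G j → G i ⊆ G j := by
    intro i j hs x hxi hxj y hyi
    rw [hGrp j]; rw [hGrp i] at hyi hxi; rw [hGrp j] at hxj
    intro t ht
    have ht' : t ∈ Set.Icc (s i) z := ⟨le_trans hs ht.1, ht.2⟩
    exact ((hyi t ht').trans ((hxi t ht').symm' hsymm)).trans (hxj t ht)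
  intro i j
  by_cases hdis : Disjoint (G i) (G j)
  · exact Or.inl hdis
  · obtain ⟨x, hxi, hxj⟩ := Set.not_disjoint_iff.mp hdis
    rcases le_total (s i) (s j) with h | h
    · exact Or.inr (Or.inl (key i j h x hxi hxj))
    · exact Or.inr (Or.inr (key j i h x hxj hxi))
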